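/- arXiv:2107.02610 — 8 statements merged into one kernel-verified Lean document; each statement's English description precedes it below -/
import Mathlib

section
/- Let v_1, ..., v_N ∈ ℂ^d with v_k = a_k + i b_k (a_k, b_k real), and let G = cob{v_1,...,v_N} be their balanced convex hull. Then Re G = co{E(v_1), ..., E(v_N)}, the convex hull of the ellipses E(v_k) = {a_k cos t + b_k sin t : t ∈ ℝ}. -/
noncomputable def ellipse {d : ℕ} (a b : EuclideanSpace ℝ (Fin d)) :
    Set (EuclideanSpace ℝ (Fin d)) :=
  {x | ∃ t : ℝ, x = Real.cos t • a + Real.sin t • b}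

noncomputable def rePart {d : ℕ} (v : Fin d → ℂ) : EuclideanSpace ℝ (Fin d) :=
  WithLp.toLp 2 (fun i => (v i).re)

noncomputable def imPart {d : ℕ} (v : Fin d → ℂ) : EuclideanSpace ℝ (Fin d) :=
  WithLp.toLp 2 (fun i => (v i).im)

/-- Balanced convex hull of the finite family `v_1, …, v_N`. -/
def cob {d N : ℕ} (v : Fin N → (Fin d → ℂ)) : Set (Fin d → ℂ) :=
  {w | ∃ z : Fin N → ℂ, (∑ k, ‖z k‖) ≤ 1 ∧ w = ∑ k, z k • v k}

/-- The real part of the balanced convex hull `cob{v_1,…,v_N}` is the convex hull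
of the ellipses `E(v_1), …, E(v_N)`. -/
theorem rePart_cob_eq_convexHull_ellipses {d N : ℕ} (hN : 0 < N)
    (v : Fin N → (Fin d → ℂ)) :
    rePart '' cob v
      = convexHull ℝ (⋃ k, ellipse (rePart (v k)) (imPart (v k))) := by
  set S : Set (EuclideanSpace ℝ (Fin d)) :=
    ⋃ k, ellipse (rePart (v k)) (imPart (v k)) with hS
  apply Set.Subset.antisymm
  · -- forward
    rintro x ⟨w, ⟨z, hz1, rfl⟩, rfl⟩
    -- points on ellipses
    set p : Fin N → EuclideanSpace ℝ (Fin d) := fun k =>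
      Real.cos (-(z k).arg) • rePart (v k) + Real.sin (-(z k).arg) • imPart (v k) with hp
    have hpS : ∀ k, p k ∈ S := fun k => Set.mem_iUnion.2 ⟨k, ⟨-(z k).arg, rfl⟩⟩
    have h0 : (0 : EuclideanSpace ℝ (Fin d)) ∈ convexHull ℝ S := by
      have h1 : p ⟨0, hN⟩ ∈ convexHull ℝ S := subset_convexHull ℝ S (hpS ⟨0, hN⟩)
      have h2 : -p ⟨0, hN⟩ ∈ convexHull ℝ S := by
        apply subset_convexHull ℝ S
        refine Set.mem_iUnion.2 ⟨⟨0, hN⟩, ⟨-(z ⟨0, hN⟩).arg + Real.pi, ?_⟩⟩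
        simp [hp, Real.cos_add_pi, Real.sin_add_pi, neg_add_rev, neg_smul]
        abel
      have := (convex_convexHull ℝ S) h1 h2 (by norm_num : (0:ℝ) ≤ 1/2)
        (by norm_num : (0:ℝ) ≤ 1/2) (by norm_num)
      simpa using this
    -- express rePart (∑ z k • v k) as ∑ |z k| • p k
    have hsum : rePart (∑ k, z k • v k) = ∑ k, ‖z k‖ • p k := by
      ext i
      have : rePart (∑ k, z k • v k) i = ∑ k, (z k * v k i).re := by
        simp [rePart, Finset.sum_apply, Complex.re_sum]
      rw [this]
      have h2 : (∑ k, ‖z k‖ • p k) i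
          = ∑ k, ‖z k‖ * (p k i) := by
        simp [WithLp.ofLp_sum, Finset.sum_apply]
      rw [h2]
      refine Finset.sum_congr rfl fun k _ => ?_
      have hpki : p k i = Real.cos ((z k).arg) * (v k i).re
          - Real.sin ((z k).arg) * (v k i).im := by
        simp [hp, rePart, imPart, Real.cos_neg, Real.sin_neg]
        ring
      rw [hpki, Complex.mul_re]
      have hc := Complex.norm_mul_cos_arg (z k)
      have hs := Complex.norm_mul_sin_arg (z k)
      rw [← hc, ← hs]
      ring
    rw [hsum]
    -- subconvex combination: add weight 1 - ∑ |z k| at 0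
    have hmem : ∀ k : Option (Fin N),
        (Option.elim k (0 : EuclideanSpace ℝ (Fin d)) p) ∈ convexHull ℝ S := by
      rintro (_ | k)
      · exact h0
      · exact subset_convexHull ℝ S (hpS k)
    have := (convex_convexHull ℝ S).sum_mem (t := (Finset.univ : Finset (Option (Fin N))))
      (w := fun o => Option.elim o (1 - ∑ k, ‖z k‖) (fun k => ‖z k‖))
      (z := fun o => Option.elim o 0 p)
      (fun o _ => by rcases o with _ | k
                     · simpa using hz1
                     · exact norm_nonneg (z k))
      (by rw [Fintype.sum_option]; simp)
      (fun o _ => hmem o)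
    rw [Fintype.sum_option] at this
    simpa using this
  · -- backward: hull minimality
    apply convexHull_min
    · rintro x hx
      rw [Set.mem_iUnion] at hx
      obtain ⟨k, t, rfl⟩ := hx
      set ζ : Fin N → ℂ := Pi.single k (Complex.exp (-(t : ℂ) * Complex.I)) with hζ
      refine ⟨∑ j, ζ j • v j, ⟨ζ, ?_, rfl⟩, ?_⟩
      · have : ∀ j, ‖ζ j‖ = if j = k then 1 else 0 := by
          intro j
          by_cases h : j = k
          · subst h; simp [hζ, Complex.norm_exp]
          · simp [hζ, Pi.single_eq_of_ne h, h]
        simp [this]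
      · have hsum : (∑ j, ζ j • v j)
            = Complex.exp (-(t : ℂ) * Complex.I) • v k := by
          rw [Finset.sum_eq_single k]
          · simp [hζ]
          · intro j _ hj; simp [hζ, Pi.single_eq_of_ne hj]
          · simp
        rw [hsum]
        ext i
        simp only [rePart, imPart, Pi.smul_apply, smul_eq_mul]
        have : Complex.exp (-(t : ℂ) * Complex.I)
            = Complex.ofReal (Real.cos t) - Complex.ofReal (Real.sin t) * Complex.I := by
          rw [Complex.exp_mul_I]
          push_cast
          rw [Complex.cos_neg, Complex.sin_neg, ← Complex.ofReal_cos, ← Complex.ofReal_sin]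
          push_cast
          ring
        rw [this]
        simp [Complex.mul_re, Complex.sub_re, Complex.sub_im, Complex.mul_im,
          Complex.cos_ofReal_re, Complex.sin_ofReal_re, rePart, imPart]
    · -- image is convex
      rintro x ⟨w1, ⟨z1, hz1, rfl⟩, rfl⟩ y ⟨w2, ⟨z2, hz2, rfl⟩, rfl⟩ a b ha hb hab
      refine ⟨∑ k, ((a : ℂ) * z1 k + (b : ℂ) * z2 k) • v k,
        ⟨fun k => (a : ℂ) * z1 k + (b : ℂ) * z2 k, ?_, rfl⟩, ?_⟩
      · calc (∑ k, ‖(a : ℂ) * z1 k + (b : ℂ) * z2 k‖)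
            ≤ ∑ k, (a * ‖z1 k‖ + b * ‖z2 k‖) := by
              refine Finset.sum_le_sum fun k _ => ?_
              refine le_trans (norm_add_le _ _) ?_
              simp [Complex.norm_real, abs_of_nonneg ha, abs_of_nonneg hb]
          _ = a * (∑ k, ‖z1 k‖) + b * (∑ k, ‖z2 k‖) := by
              rw [Finset.sum_add_distrib, Finset.mul_sum, Finset.mul_sum]
          _ ≤ a * 1 + b * 1 := by
              gcongr
          _ = 1 := by rw [mul_one, mul_one, hab]
      · ext i
        simp only [rePart, Finset.sum_apply, Pi.smul_apply, Pi.add_apply, smul_eq_mul,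
          Complex.re_sum, PiLp.add_apply, PiLp.smul_apply, smul_eq_mul]
        rw [Finset.mul_sum, Finset.mul_sum, ← Finset.sum_add_distrib]
        refine Finset.sum_congr rfl fun k _ => ?_
        simp [add_mul, Complex.mul_re]
        ring
end

section
/- Let E_0, ..., E_N be ellipses in ℝ^d with E_k = E(a_k, b_k), and P = co{E_1,...,E_N}. Then E_0 is NOT contained in P if and only if there exists x ∈ ℝ^d with ⟨x,a_0⟩² + ⟨x,b_0⟩² > ⟨x,a_k⟩² + ⟨x,b_k⟩² for all k = 1,...,N. -/
section Aux

open Real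

lemma exists_cos_sin_eq {c s : ℝ} (h : c ^ 2 + s ^ 2 = 1) :
    ∃ t, Real.cos t = c ∧ Real.sin t = s := by
  have hz : (⟨c, s⟩ : ℂ) ≠ 0 := by
    intro h0
    rw [Complex.ext_iff] at h0
    simp only [Complex.zero_re, Complex.zero_im] at h0
    obtain ⟨hc, hs⟩ := h0
    rw [hc, hs] at h; norm_num at h
  have habs : ‖(⟨c, s⟩ : ℂ)‖ = 1 := by
    rw [Complex.norm_def, Complex.normSq_mk, show c * c + s * s = 1 by nlinarith]
    exact Real.sqrt_one
  refine ⟨Complex.arg ⟨c, s⟩, ?_, ?_⟩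
  · rw [Complex.cos_arg hz, habs]; simp
  · rw [Complex.sin_arg, habs]; simp

lemma cos_mul_add_sin_mul_le (t A B : ℝ) :
    Real.cos t * A + Real.sin t * B ≤ Real.sqrt (A ^ 2 + B ^ 2) := by
  have h2 : (Real.cos t * A + Real.sin t * B) ^ 2 ≤ A ^ 2 + B ^ 2 := by
    nlinarith [Real.sin_sq_add_cos_sq t, sq_nonneg (Real.cos t * B - Real.sin t * A)]
  calc Real.cos t * A + Real.sin t * B ≤ |Real.cos t * A + Real.sin t * B| := le_abs_self _
    _ = Real.sqrt ((Real.cos t * A + Real.sin t * B) ^ 2) := (Real.sqrt_sq_eq_abs _).symm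
    _ ≤ Real.sqrt (A ^ 2 + B ^ 2) := Real.sqrt_le_sqrt h2

lemma exists_cos_mul_add_sin_mul_eq (A B : ℝ) :
    ∃ t, Real.cos t * A + Real.sin t * B = Real.sqrt (A ^ 2 + B ^ 2) := by
  by_cases h : A = 0 ∧ B = 0
  · exact ⟨0, by simp [h.1, h.2]⟩
  · have hAB : 0 < A ^ 2 + B ^ 2 := by
      rcases not_and_or.mp h with h | h <;> positivity
    set r := Real.sqrt (A ^ 2 + B ^ 2) with hr
    have hr0 : 0 < r := Real.sqrt_pos.mpr hAB
    have hr2 : r ^ 2 = A ^ 2 + B ^ 2 := Real.sq_sqrt hAB.le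
    have hcs : (A / r) ^ 2 + (B / r) ^ 2 = 1 := by
      field_simp; linarith
    obtain ⟨t, htc, hts⟩ := exists_cos_sin_eq hcs
    refine ⟨t, ?_⟩
    rw [htc, hts]
    field_simp
    linarith

lemma convexHull_ellipse {d : ℕ} (a b : EuclideanSpace ℝ (Fin d)) :
    convexHull ℝ (ellipse a b)
      = {p | ∃ c s : ℝ, c ^ 2 + s ^ 2 ≤ 1 ∧ p = c • a + s • b} := by
  apply Set.Subset.antisymm
  · apply convexHull_min
    · rintro _ ⟨t, rfl⟩
      exact ⟨Real.cos t, Real.sin t, by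
        rw [show Real.cos t ^ 2 + Real.sin t ^ 2 = 1 from Real.cos_sq_add_sin_sq t], rfl⟩
    · rintro _ ⟨c, s, hcs, rfl⟩ _ ⟨c', s', hcs', rfl⟩ θ θ' hθ hθ' hθθ
      refine ⟨θ * c + θ' * c', θ * s + θ' * s', ?_, by module⟩
      nlinarith [mul_nonneg (mul_nonneg hθ hθ') (sq_nonneg (c - c')),
        mul_nonneg (mul_nonneg hθ hθ') (sq_nonneg (s - s')),
        mul_le_mul_of_nonneg_left hcs hθ, mul_le_mul_of_nonneg_left hcs' hθ']
  · rintro _ ⟨c, s, hcs, rfl⟩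
    have ha : a ∈ ellipse a b := ⟨0, by simp⟩
    have hcc : Convex ℝ (convexHull ℝ (ellipse a b)) := convex_convexHull ℝ _
    by_cases hr : c ^ 2 + s ^ 2 = 0
    · have hc0 : c = 0 := by nlinarith [sq_nonneg c, sq_nonneg s]
      have hs0 : s = 0 := by nlinarith [sq_nonneg c, sq_nonneg s]
      have hna : -a ∈ ellipse a b := ⟨π, by simp⟩
      have := hcc (subset_convexHull ℝ _ ha) (subset_convexHull ℝ _ hna)
        (by norm_num : (0:ℝ) ≤ 1/2) (by norm_num : (0:ℝ) ≤ 1/2) (by norm_num)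
      have heq : c • a + s • b = (1/2 : ℝ) • a + (1/2 : ℝ) • (-a) := by
        rw [hc0, hs0]; module
      rw [heq]; exact this
    · set r := Real.sqrt (c ^ 2 + s ^ 2) with hrdef
      have hpos : 0 < c ^ 2 + s ^ 2 := lt_of_le_of_ne (by positivity) (Ne.symm hr)
      have hr0 : 0 < r := Real.sqrt_pos.mpr hpos
      have hr2 : r ^ 2 = c ^ 2 + s ^ 2 := Real.sq_sqrt hpos.le
      have hr1 : r ≤ 1 := by
        exact Real.sqrt_le_one.mpr hcs
      have hcs1 : (c / r) ^ 2 + (s / r) ^ 2 = 1 := by field_simp; linarith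
      obtain ⟨t, htc, hts⟩ := exists_cos_sin_eq hcs1
      have hq : Real.cos t • a + Real.sin t • b ∈ ellipse a b := ⟨t, rfl⟩
      have hq' : -(Real.cos t • a + Real.sin t • b) ∈ ellipse a b :=
        ⟨t + π, by rw [Real.cos_add_pi, Real.sin_add_pi]; module⟩
      have hmem := hcc (subset_convexHull ℝ _ hq) (subset_convexHull ℝ _ hq')
        (by linarith : (0:ℝ) ≤ (1 + r)/2) (by linarith : (0:ℝ) ≤ (1 - r)/2) (by ring)
      have heq : c • a + s • b
          = ((1 + r)/2) • (Real.cos t • a + Real.sin t • b)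
            + ((1 - r)/2) • (-(Real.cos t • a + Real.sin t • b)) := by
        rw [htc, hts]
        have hc : r * (c / r) = c := by field_simp
        have hs : r * (s / r) = s := by field_simp
        calc c • a + s • b = (r * (c/r)) • a + (r * (s/r)) • b := by rw [hc, hs]
          _ = ((1 + r)/2) • ((c/r) • a + (s/r) • b)
              + ((1 - r)/2) • (-((c/r) • a + (s/r) • b)) := by module
      rw [heq]; exact hmem

lemma isCompact_disc {d : ℕ} (a b : EuclideanSpace ℝ (Fin d)) :
    IsCompact {p : EuclideanSpace ℝ (Fin d) |
      ∃ c s : ℝ, c ^ 2 + s ^ 2 ≤ 1 ∧ p = c • a + s • b} := by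
  have heq : {p : EuclideanSpace ℝ (Fin d) | ∃ c s : ℝ, c ^ 2 + s ^ 2 ≤ 1 ∧ p = c • a + s • b}
      = (fun cs : ℝ × ℝ => cs.1 • a + cs.2 • b) '' {cs : ℝ × ℝ | cs.1 ^ 2 + cs.2 ^ 2 ≤ 1} := by
    ext p
    constructor
    · rintro ⟨c, s, h1, rfl⟩; exact ⟨(c, s), h1, rfl⟩
    · rintro ⟨⟨c, s⟩, h1, rfl⟩; exact ⟨c, s, h1, rfl⟩
  rw [heq]
  have hcomp : IsCompact {cs : ℝ × ℝ | cs.1 ^ 2 + cs.2 ^ 2 ≤ 1} := by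
    apply Metric.isCompact_of_isClosed_isBounded
    · exact isClosed_le (by fun_prop) continuous_const
    · apply (Metric.isBounded_closedBall (x := (0 : ℝ × ℝ)) (r := 1)).subset
      rintro ⟨c, s⟩ h
      simp only [Set.mem_setOf_eq] at h
      rw [Metric.mem_closedBall, dist_zero_right, Prod.norm_def]
      apply max_le <;> · rw [Real.norm_eq_abs, abs_le]; constructor <;> nlinarith
  exact hcomp.image (by fun_prop)

lemma convexHull_iUnion_eq {N : ℕ} {E : Type*} [AddCommGroup E] [Module ℝ E]
    (D : Fin N → Set E) (p : Fin N → E) (hconv : ∀ k, Convex ℝ (D k))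
    (hp : ∀ k, p k ∈ D k) :
    convexHull ℝ (⋃ k, D k)
      = (fun q : (Fin N → ℝ) × (Fin N → E) => ∑ k, q.1 k • q.2 k) ''
          ((stdSimplex ℝ (Fin N)) ×ˢ Set.univ.pi D) := by
  apply Set.Subset.antisymm
  · apply convexHull_min
    · intro y hy
      obtain ⟨k, hk⟩ := Set.mem_iUnion.mp hy
      refine ⟨(fun j => if j = k then 1 else 0, Function.update p k y), ⟨⟨fun j => ?_, ?_⟩, ?_⟩, ?_⟩
      · dsimp only; split <;> norm_num
      · simp
      · intro j _
        rcases eq_or_ne j k with rfl | hne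
        · simpa using hk
        · simpa [Function.update_of_ne hne] using hp j
      · dsimp only
        rw [Finset.sum_eq_single k]
        · simp
        · intro j _ hne; simp [hne]
        · intro h; exact absurd (Finset.mem_univ k) h
    · rintro x ⟨⟨w, y⟩, ⟨⟨hw0, hw1⟩, hy⟩, rfl⟩ x' ⟨⟨w', y'⟩, ⟨⟨hw0', hw1'⟩, hy'⟩, rfl⟩ θ θ' hθ hθ' hθθ
      have hv0 : ∀ k, 0 ≤ θ * w k + θ' * w' k := fun k =>
        add_nonneg (mul_nonneg hθ (hw0 k)) (mul_nonneg hθ' (hw0' k))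
      refine ⟨(fun k => θ * w k + θ' * w' k,
        fun k => if h : θ * w k + θ' * w' k = 0 then p k
          else ((θ * w k)/(θ * w k + θ' * w' k)) • y k
            + ((θ' * w' k)/(θ * w k + θ' * w' k)) • y' k), ⟨⟨⟨hv0, ?_⟩, ?_⟩, ?_⟩⟩
      · rw [Finset.sum_add_distrib, ← Finset.mul_sum, ← Finset.mul_sum, hw1, hw1']
        simpa using hθθ
      · intro k _
        dsimp only
        split_ifs with h
        · exact hp k
        · exact hconv k (hy k (Set.mem_univ k)) (hy' k (Set.mem_univ k))
            (div_nonneg (mul_nonneg hθ (hw0 k)) (hv0 k))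
            (div_nonneg (mul_nonneg hθ' (hw0' k)) (hv0 k))
            (by rw [← add_div, div_self h])
      · dsimp only
        rw [Finset.smul_sum, Finset.smul_sum, ← Finset.sum_add_distrib]
        apply Finset.sum_congr rfl
        intro k _
        split_ifs with h
        · have h1 : θ * w k = 0 := by nlinarith [mul_nonneg hθ (hw0 k), mul_nonneg hθ' (hw0' k)]
          have h2 : θ' * w' k = 0 := by linarith
          simp only [smul_smul, h, h1, h2, zero_smul, add_zero]
        · have hc1 : (θ * w k + θ' * w' k) * ((θ * w k)/(θ * w k + θ' * w' k)) = θ * w k := by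
            field_simp
          have hc2 : (θ * w k + θ' * w' k) * ((θ' * w' k)/(θ * w k + θ' * w' k)) = θ' * w' k := by
            field_simp
          simp only [smul_add, smul_smul, hc1, hc2]
  · rintro x ⟨⟨w, y⟩, ⟨⟨hw0, hw1⟩, hy⟩, rfl⟩
    exact (convex_convexHull ℝ _).sum_mem (fun k _ => hw0 k) hw1
      (fun k _ => subset_convexHull ℝ _ (Set.mem_iUnion.2 ⟨k, hy k (Set.mem_univ k)⟩))

end Aux

/-- `E_0 ⊄ co{E_1,…,E_N}` iff there is `x` with
`⟨x,a_0⟩² + ⟨x,b_0⟩² > ⟨x,a_k⟩² + ⟨x,b_k⟩²` for all `k`. -/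
theorem not_subset_iff_separating_functional {d N : ℕ}
    (a b : Fin N → EuclideanSpace ℝ (Fin d)) (a0 b0 : EuclideanSpace ℝ (Fin d)) :
    ¬ (ellipse a0 b0 ⊆ convexHull ℝ (⋃ k, ellipse (a k) (b k)))
      ↔ ∃ x : EuclideanSpace ℝ (Fin d), ∀ k,
          (inner ℝ x (a k) : ℝ) ^ 2 + (inner ℝ x (b k) : ℝ) ^ 2
            < (inner ℝ x a0 : ℝ) ^ 2 + (inner ℝ x b0 : ℝ) ^ 2 := by
  set S := ⋃ k, ellipse (a k) (b k) with hS
  constructor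
  · -- forward: separation
    intro h
    obtain ⟨y, hyE, hyP⟩ := Set.not_subset.mp h
    -- the convex hull is compact, hence closed
    set D : Fin N → Set (EuclideanSpace ℝ (Fin d)) :=
      fun k => {p | ∃ c s : ℝ, c ^ 2 + s ^ 2 ≤ 1 ∧ p = c • (a k) + s • (b k)} with hD
    have hDconv : ∀ k, Convex ℝ (D k) := by
      intro k; rw [hD]; simp only
      rw [← convexHull_ellipse]; exact convex_convexHull ℝ _
    have hDmem : ∀ k, a k ∈ D k := fun k => ⟨1, 0, by norm_num, by simp⟩
    have h1 : convexHull ℝ S = convexHull ℝ (⋃ k, D k) := by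
      apply Set.Subset.antisymm
      · apply convexHull_mono
        apply Set.iUnion_mono
        intro k
        rw [hD]
        intro q hq
        have := subset_convexHull ℝ (ellipse (a k) (b k)) hq
        rwa [convexHull_ellipse] at this
      · apply convexHull_min _ (convex_convexHull ℝ _)
        intro q hq
        obtain ⟨k, hk⟩ := Set.mem_iUnion.mp hq
        have : q ∈ convexHull ℝ (ellipse (a k) (b k)) := by
          rw [convexHull_ellipse]; exact hk
        exact convexHull_mono (Set.subset_iUnion (fun k => ellipse (a k) (b k)) k) this
    have h2 := convexHull_iUnion_eq D a hDconv hDmem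
    have hKcomp : IsCompact (convexHull ℝ S) := by
      rw [h1, h2]
      exact ((isCompact_stdSimplex ℝ (Fin N)).prod
        (isCompact_univ_pi (fun k => isCompact_disc (a k) (b k)))).image
        (by fun_prop)
    obtain ⟨f, u, hfu, hufy⟩ := geometric_hahn_banach_closed_point
      (convex_convexHull ℝ S) hKcomp.isClosed hyP
    set v := (InnerProductSpace.toDual ℝ (EuclideanSpace ℝ (Fin d))).symm f with hv
    have hvw : ∀ w : EuclideanSpace ℝ (Fin d), (inner ℝ v w : ℝ) = f w := fun w =>
      InnerProductSpace.toDual_symm_apply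
    refine ⟨v, fun k => ?_⟩
    rw [hvw, hvw, hvw, hvw]
    have hlt : ∀ s : ℝ, Real.cos s * f (a k) + Real.sin s * f (b k) < u := by
      intro s
      have hmem : Real.cos s • a k + Real.sin s • b k ∈ convexHull ℝ S :=
        subset_convexHull ℝ S (Set.mem_iUnion.2 ⟨k, s, rfl⟩)
      have := hfu _ hmem
      simpa [map_add, map_smul, smul_eq_mul] using this
    obtain ⟨s, hs⟩ := exists_cos_mul_add_sin_mul_eq (f (a k)) (f (b k))
    have hsq : Real.sqrt (f (a k) ^ 2 + f (b k) ^ 2) < u := hs ▸ hlt s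
    have hu : 0 < u := lt_of_le_of_lt (Real.sqrt_nonneg _) hsq
    have h2k : f (a k) ^ 2 + f (b k) ^ 2 < u ^ 2 := by
      nlinarith [Real.sq_sqrt (show (0:ℝ) ≤ f (a k) ^ 2 + f (b k) ^ 2 by positivity),
        Real.sqrt_nonneg (f (a k) ^ 2 + f (b k) ^ 2)]
    obtain ⟨t, rfl⟩ := hyE
    have h3 : u < Real.cos t * f a0 + Real.sin t * f b0 := by
      simpa [map_add, map_smul, smul_eq_mul] using hufy
    have h4 : (Real.cos t * f a0 + Real.sin t * f b0) ^ 2 ≤ f a0 ^ 2 + f b0 ^ 2 := by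
      nlinarith [Real.sin_sq_add_cos_sq t, sq_nonneg (Real.cos t * f b0 - Real.sin t * f a0)]
    nlinarith
  · -- backward: explicit witness outside
    rintro ⟨x, hx⟩ hsub
    obtain ⟨t, ht⟩ := exists_cos_mul_add_sin_mul_eq (inner ℝ x a0 : ℝ) (inner ℝ x b0 : ℝ)
    have hy : Real.cos t • a0 + Real.sin t • b0 ∈ ellipse a0 b0 := ⟨t, rfl⟩
    have hlin : IsLinearMap ℝ (fun p : EuclideanSpace ℝ (Fin d) => (inner ℝ x p : ℝ)) :=
      ⟨fun p q => inner_add_right x p q, fun c p => by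
        rw [real_inner_smul_right]; rfl⟩
    have hsub2 : convexHull ℝ S ⊆
        {p : EuclideanSpace ℝ (Fin d) |
          (inner ℝ x p : ℝ) < Real.sqrt ((inner ℝ x a0 : ℝ) ^ 2 + (inner ℝ x b0 : ℝ) ^ 2)} := by
      apply convexHull_min _ (convex_halfSpace_lt hlin _)
      rintro p hp
      obtain ⟨k, s, rfl⟩ := Set.mem_iUnion.mp hp
      show (inner ℝ x _ : ℝ) < _
      rw [inner_add_right, real_inner_smul_right, real_inner_smul_right]
      calc Real.cos s * (inner ℝ x (a k) : ℝ) + Real.sin s * (inner ℝ x (b k) : ℝ)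
          ≤ Real.sqrt ((inner ℝ x (a k) : ℝ) ^ 2 + (inner ℝ x (b k) : ℝ) ^ 2) :=
            cos_mul_add_sin_mul_le s _ _
        _ < Real.sqrt ((inner ℝ x a0 : ℝ) ^ 2 + (inner ℝ x b0 : ℝ) ^ 2) :=
            Real.sqrt_lt_sqrt (by positivity) (hx k)
    have := hsub2 (hsub hy)
    rw [Set.mem_setOf_eq, inner_add_right, real_inner_smul_right, real_inner_smul_right, ht] at this
    exact lt_irrefl _ this
end

section
/- If v_0 ∈ ℂ^d belongs to the balanced convex hull G = cob{v_1,...,v_N}, then the ellipse E(v_0) is contained in the convex hull of the ellipses E(v_1),...,E(v_N). -/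
/-- If `v_0 ∈ cob{v_1,…,v_N}`, then `E(v_0) ⊆ co{E(v_1),…,E(v_N)}`. -/
theorem ellipse_subset_of_mem_cob {d N : ℕ} (hN : 0 < N)
    (v : Fin N → (Fin d → ℂ)) (v0 : Fin d → ℂ) (h : v0 ∈ cob v) :
    ellipse (rePart v0) (imPart v0)
      ⊆ convexHull ℝ (⋃ k, ellipse (rePart (v k)) (imPart (v k))) := by
  obtain ⟨z, hz, hv0⟩ := h
  intro x hx
  obtain ⟨t, hxt⟩ := hx
  set C := convexHull ℝ (⋃ k, ellipse (rePart (v k)) (imPart (v k))) with hCdef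
  have hC : Convex ℝ C := convex_convexHull ℝ _
  have hsub : ∀ k, ellipse (rePart (v k)) (imPart (v k)) ⊆ C := fun k =>
    (Set.subset_iUnion (fun k => ellipse (rePart (v k)) (imPart (v k))) k).trans
      (subset_convexHull ℝ _)
  -- 0 ∈ C
  have h0 : (0 : EuclideanSpace ℝ (Fin d)) ∈ C := by
    have h1 : rePart (v ⟨0, hN⟩) ∈ C := hsub ⟨0, hN⟩ ⟨0, by simp [ellipse]⟩
    have h2 : (-1 : ℝ) • rePart (v ⟨0, hN⟩) ∈ C := hsub ⟨0, hN⟩ ⟨Real.pi, by simp [ellipse]⟩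
    have := hC h1 h2 (by norm_num : (0:ℝ) ≤ 1/2) (by norm_num : (0:ℝ) ≤ 1/2) (by norm_num)
    convert this using 1
    rw [smul_smul]
    norm_num
  -- setup
  set c : Fin N → ℂ := fun k => Complex.exp ((-t : ℝ) * Complex.I) * z k with hc
  set r : Fin N → ℝ := fun k => ‖c k‖ with hr
  set θ : Fin N → ℝ := fun k => Complex.arg (c k) with hθ
  have hrz : ∀ k, r k = ‖z k‖ := by
    intro k
    simp [hr, hc, map_mul, Complex.norm_exp]
  have hS : ∑ k, r k ≤ 1 := by
    rw [Finset.sum_congr rfl fun k _ => hrz k]; exact hz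
  set p : Fin N → EuclideanSpace ℝ (Fin d) := fun k =>
    Real.cos (-(θ k)) • rePart (v k) + Real.sin (-(θ k)) • imPart (v k) with hp
  have hpC : ∀ k, p k ∈ C := fun k => hsub k ⟨-(θ k), rfl⟩
  -- key identity : x = ∑ k, r k • p k
  have hkey : x = ∑ k, r k • p k := by
    ext i
    have hsum : (∑ k, r k • p k) i = ∑ k, r k • (p k i) := by
      induction (Finset.univ : Finset (Fin N)) using Finset.induction with
      | empty => simp
      | insert _ _ hnot ih =>
        rw [Finset.sum_insert hnot, Finset.sum_insert hnot, ← ih]; rfl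
    rw [hsum, hxt]
    have hvi : v0 i = ∑ k, z k * v k i := by
      rw [hv0]; simp [Finset.sum_apply]
    have hck : ∀ k, c k = (r k : ℂ) * Complex.exp ((θ k : ℂ) * Complex.I) :=
      fun k => (Complex.norm_mul_exp_arg_mul_I (c k)).symm
    have he1 : (Complex.exp (-(↑t * Complex.I))).re = Real.cos t := by
      rw [← neg_mul, ← Complex.ofReal_neg, Complex.exp_ofReal_mul_I_re, Real.cos_neg]
    have he2 : (Complex.exp (-(↑t * Complex.I))).im = - Real.sin t := by
      rw [← neg_mul, ← Complex.ofReal_neg, Complex.exp_ofReal_mul_I_im, Real.sin_neg]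
    have lhs : (Real.cos t • rePart v0 + Real.sin t • imPart v0) i
        = (Complex.exp ((-t : ℝ) * Complex.I) * v0 i).re := by
      simp [rePart, imPart, Complex.mul_re, he1, he2]
    rw [lhs, hvi, Finset.mul_sum, Complex.re_sum]
    refine Finset.sum_congr rfl fun k _ => ?_
    have : Complex.exp ((-t : ℝ) * Complex.I) * (z k * v k i) = c k * v k i := by
      rw [hc]; ring
    rw [this, hck k]
    simp [hp, rePart, imPart, Complex.mul_re, Complex.mul_im, Real.cos_neg, Real.sin_neg,
      smul_eq_mul]
    ring
  -- conclude by convexity over Option (Fin N)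
  set w : Option (Fin N) → ℝ := fun o => o.elim (1 - ∑ k, r k) r with hw
  set q : Option (Fin N) → EuclideanSpace ℝ (Fin d) := fun o => o.elim 0 p with hq
  have := hC.sum_mem (t := Finset.univ) (w := w) (z := q)
    (fun o _ => by
      cases o with
      | none => simpa [hw] using hS
      | some k => exact (norm_nonneg _))
    (by simp [hw, Fintype.sum_option])
    (fun o _ => by cases o with
      | none => exact h0
      | some k => exact hpC k)
  rw [Fintype.sum_option] at this
  simpa [hw, hq, hkey] using this
end

section
/- Let v_1,...,v_N ∈ ℂ^d and let G = cob{v_1, v̄_1, ..., v_N, v̄_N} be the self-conjugate balanced complex polytope, and P = co{E(v_1),...,E(v_N)} ⊂ ℝ^d. If v_0 = a_0 + i b_0 ∉ G, then the ellipse E(v_0) is not contained in (1/2)P. -/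
open Pointwise

section Aux

variable {d N : ℕ}

/-- The self-conjugate balanced hull as a set. -/
def cobSet (v : Fin N → (Fin d → ℂ)) : Set (Fin d → ℂ) :=
  {u | ∃ z w : Fin N → ℂ,
      (∑ k, ‖z k‖) + (∑ k, ‖w k‖) ≤ 1 ∧
      u = (∑ k, z k • v k)
            + ∑ k, w k • (fun i => (starRingEnd ℂ) (v k i))}

lemma convex_cobSet (v : Fin N → (Fin d → ℂ)) : Convex ℝ (cobSet v) := by
  rintro u₁ ⟨z₁, w₁, h1, rfl⟩ u₂ ⟨z₂, w₂, h2, rfl⟩ α β hα hβ hαβ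
  refine ⟨fun k => α • z₁ k + β • z₂ k, fun k => α • w₁ k + β • w₂ k, ?_, ?_⟩
  · have habs : ∀ (x y : ℂ),
        ‖α • x + β • y‖ ≤ α * ‖x‖ + β * ‖y‖ := by
      intro x y
      refine (norm_add_le _ _).trans ?_
      rw [norm_smul, norm_smul, Real.norm_of_nonneg hα, Real.norm_of_nonneg hβ]
    have hz : ∑ k, ‖α • z₁ k + β • z₂ k‖
        ≤ α * ∑ k, ‖z₁ k‖ + β * ∑ k, ‖z₂ k‖ := by
      rw [Finset.mul_sum, Finset.mul_sum, ← Finset.sum_add_distrib]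
      exact Finset.sum_le_sum fun k _ => habs _ _
    have hw : ∑ k, ‖α • w₁ k + β • w₂ k‖
        ≤ α * ∑ k, ‖w₁ k‖ + β * ∑ k, ‖w₂ k‖ := by
      rw [Finset.mul_sum, Finset.mul_sum, ← Finset.sum_add_distrib]
      exact Finset.sum_le_sum fun k _ => habs _ _
    nlinarith [hz, hw, h1, h2, hα, hβ]
  · have rew : ∀ (z₁ z₂ : Fin N → ℂ) (u : Fin N → Fin d → ℂ),
        ∑ k, (α • z₁ k + β • z₂ k) • u k
          = α • (∑ k, z₁ k • u k) + β • (∑ k, z₂ k • u k) := by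
      intro z₁ z₂ u
      rw [Finset.smul_sum, Finset.smul_sum, ← Finset.sum_add_distrib]
      refine Finset.sum_congr rfl fun k _ => ?_
      rw [add_smul, smul_assoc, smul_assoc]
    rw [rew, rew]
    module

lemma isClosed_cobSet (v : Fin N → (Fin d → ℂ)) : IsClosed (cobSet v) := by
  have hK : IsCompact {p : (Fin N → ℂ) × (Fin N → ℂ) |
      (∑ k, ‖p.1 k‖) + (∑ k, ‖p.2 k‖) ≤ 1} := by
    apply Metric.isCompact_of_isClosed_isBounded
    · apply isClosed_le _ continuous_const
      exact ((continuous_finset_sum _ fun k _ =>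
          continuous_norm.comp ((continuous_apply k).comp continuous_fst)).add
        (continuous_finset_sum _ fun k _ =>
          continuous_norm.comp ((continuous_apply k).comp continuous_snd)))
    · apply Bornology.IsBounded.subset
        (Metric.isBounded_closedBall (x := (0 : (Fin N → ℂ) × (Fin N → ℂ))) (r := 1))
      intro p hp
      simp only [Set.mem_setOf_eq] at hp
      have h1nn : (0:ℝ) ≤ ∑ k, ‖p.1 k‖ :=
        Finset.sum_nonneg fun i _ => norm_nonneg _
      have h2nn : (0:ℝ) ≤ ∑ k, ‖p.2 k‖ :=
        Finset.sum_nonneg fun i _ => norm_nonneg _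
      have hb1 : ∀ k, ‖p.1 k‖ ≤ 1 := by
        intro k
        have := Finset.single_le_sum (f := fun k => ‖p.1 k‖)
          (fun i _ => norm_nonneg _) (Finset.mem_univ k)
        linarith
      have hb2 : ∀ k, ‖p.2 k‖ ≤ 1 := by
        intro k
        have := Finset.single_le_sum (f := fun k => ‖p.2 k‖)
          (fun i _ => norm_nonneg _) (Finset.mem_univ k)
        linarith
      simp only [Metric.mem_closedBall, dist_zero_right]
      rw [Prod.norm_def]
      apply max_le
      · exact pi_norm_le_iff_of_nonneg zero_le_one |>.mpr fun k => hb1 k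
      · exact pi_norm_le_iff_of_nonneg zero_le_one |>.mpr fun k => hb2 k
  have himg : cobSet v = (fun p : (Fin N → ℂ) × (Fin N → ℂ) =>
      (∑ k, p.1 k • v k) + ∑ k, p.2 k • (fun i => (starRingEnd ℂ) (v k i))) ''
      {p | (∑ k, ‖p.1 k‖) + (∑ k, ‖p.2 k‖) ≤ 1} := by
    ext u
    constructor
    · rintro ⟨z, w, h, rfl⟩; exact ⟨(z, w), h, rfl⟩
    · rintro ⟨⟨z, w⟩, h, rfl⟩; exact ⟨z, w, h, rfl⟩
  rw [himg]
  refine (hK.image ?_).isClosed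
  fun_prop

lemma cobSet_smul_exp (v : Fin N → (Fin d → ℂ)) (t : ℝ) {u : Fin d → ℂ}
    (hu : u ∈ cobSet v) :
    (fun i => Complex.exp (↑t * Complex.I) * u i) ∈ cobSet v := by
  obtain ⟨z, w, h, rfl⟩ := hu
  refine ⟨fun k => Complex.exp (↑t * Complex.I) * z k,
      fun k => Complex.exp (↑t * Complex.I) * w k, ?_, ?_⟩
  · simpa [norm_mul, Complex.norm_exp_ofReal_mul_I] using h
  · funext i
    simp [Finset.sum_apply, Pi.add_apply, Pi.smul_apply, smul_eq_mul,
      Finset.mul_sum, mul_add, mul_assoc]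

lemma mem_cobSet_of_ellipse (v : Fin N → (Fin d → ℂ)) (k : Fin N) (s : ℝ) :
    (fun i => (((Real.cos s • rePart (v k) + Real.sin s • imPart (v k)) i : ℝ) : ℂ))
      ∈ cobSet v := by
  refine ⟨fun j => if j = k then Complex.exp (↑(-s) * Complex.I) / 2 else 0,
      fun j => if j = k then Complex.exp (↑s * Complex.I) / 2 else 0, ?_, ?_⟩
  · norm_num [apply_ite, map_div₀, Complex.norm_exp, Finset.sum_ite_eq']
  · funext i
    simp only [Finset.sum_apply, Pi.add_apply, Pi.smul_apply, smul_eq_mul, ite_mul, zero_mul,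
      Finset.sum_ite_eq', Finset.mem_univ, if_true]
    set u := Real.cos s with hu
    set w := Real.sin s with hw
    have hz : v k i = ↑((v k i).re) + ↑((v k i).im) * Complex.I := (Complex.re_add_im _).symm
    have hcz : (starRingEnd ℂ) (v k i) = ↑((v k i).re) - ↑((v k i).im) * Complex.I := by
      simp [Complex.ext_iff]
    have e1 : Complex.exp (↑(-s) * Complex.I) = ↑u - ↑w * Complex.I := by
      rw [hu, hw, Complex.exp_mul_I]
      push_cast
      rw [Complex.cos_neg, Complex.sin_neg]
      ring
    have e2 : Complex.exp (↑s * Complex.I) = ↑u + ↑w * Complex.I := by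
      rw [hu, hw, Complex.exp_mul_I, Complex.ofReal_cos, Complex.ofReal_sin]
    have hval : ((Real.cos s • rePart (v k) + Real.sin s • imPart (v k)) i : ℝ)
        = u * (v k i).re + w * (v k i).im := by
      simp [rePart, imPart, hu, hw]
    rw [e1, e2, hval]
    push_cast
    linear_combination (-(↑u - ↑w*Complex.I)/2) * hz + (-(↑u + ↑w*Complex.I)/2) * hcz
      + (↑w * ↑((v k i).im)) * Complex.I_sq

end Aux

/-- If `v_0` is not in the self-conjugate balanced complex polytope
`G = cob{v_1, v̄_1, …, v_N, v̄_N}`, then `E(v_0)` is not contained in `(1/2)P`,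
where `P = co{E(v_1),…,E(v_N)}`. -/
theorem not_subset_half_of_not_mem_cob {d N : ℕ}
    (v : Fin N → (Fin d → ℂ)) (v0 : Fin d → ℂ)
    (hv0 : ¬ ∃ z w : Fin N → ℂ,
        (∑ k, ‖z k‖) + (∑ k, ‖w k‖) ≤ 1 ∧
        v0 = (∑ k, z k • v k)
              + ∑ k, w k • (fun i => (starRingEnd ℂ) (v k i))) :
    ¬ (ellipse (rePart v0) (imPart v0) ⊆
        (2⁻¹ : ℝ) • convexHull ℝ (⋃ k, ellipse (rePart (v k)) (imPart (v k)))) := by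
  intro hsub
  apply hv0
  have hQ : convexHull ℝ (⋃ k, ellipse (rePart (v k)) (imPart (v k))) ⊆
      {p : EuclideanSpace ℝ (Fin d) | (fun i => ((p i : ℝ) : ℂ)) ∈ cobSet v} := by
    apply convexHull_min
    · rintro p hp
      simp only [Set.mem_iUnion] at hp
      obtain ⟨k, s, rfl⟩ := hp
      exact mem_cobSet_of_ellipse v k s
    · rintro p hp q hq α β hα hβ hαβ
      have heq : (fun i => (((α • p + β • q : EuclideanSpace ℝ (Fin d)) i : ℝ) : ℂ))
          = α • (fun i => ((p i : ℝ) : ℂ)) + β • (fun i => ((q i : ℝ) : ℂ)) := by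
        funext i
        simp only [PiLp.add_apply, PiLp.smul_apply, smul_eq_mul, Pi.add_apply, Pi.smul_apply,
          Complex.real_smul]
        push_cast; ring
      show _ ∈ cobSet v
      rw [heq]
      exact convex_cobSet v hp hq hα hβ hαβ
  set f : ℝ → (Fin d → ℂ) := fun t i =>
    Complex.exp (↑t * Complex.I)
      * ((2 * (Real.cos t * (v0 i).re + Real.sin t * (v0 i).im) : ℝ) : ℂ) with hf
  have hfS : ∀ t, f t ∈ cobSet v := by
    intro t
    have hx : Real.cos t • rePart v0 + Real.sin t • imPart v0
        ∈ ellipse (rePart v0) (imPart v0) := ⟨t, rfl⟩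
    obtain ⟨y, hy, hxy⟩ := Set.mem_smul_set.mp (hsub hx)
    have hy2 : y = (2:ℝ) • (Real.cos t • rePart v0 + Real.sin t • imPart v0) := by
      rw [← hxy, smul_smul]; norm_num
    have hyS : (fun i => ((y i : ℝ) : ℂ)) ∈ cobSet v := hQ hy
    have hform : f t = fun i => Complex.exp (↑t * Complex.I) * ((y i : ℝ) : ℂ) := by
      funext i
      rw [hf]
      simp only [hy2, PiLp.smul_apply, PiLp.add_apply, smul_eq_mul, rePart, imPart, PiLp.toLp_apply]
    rw [hform]
    exact cobSet_smul_exp v t hyS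
  have h2π : (0:ℝ) < 2 * Real.pi := by positivity
  have hfc : Continuous f := by
    apply continuous_pi
    intro i
    fun_prop
  have hfi : MeasureTheory.IntegrableOn f (Set.Ioc 0 (2*Real.pi)) := hfc.integrableOn_Ioc
  have hμ0 : MeasureTheory.volume (Set.Ioc (0:ℝ) (2*Real.pi)) ≠ 0 := by
    rw [Real.volume_Ioc]
    simp only [ne_eq, ENNReal.ofReal_eq_zero, not_le]
    linarith
  have hμt : MeasureTheory.volume (Set.Ioc (0:ℝ) (2*Real.pi)) ≠ ⊤ := by
    rw [Real.volume_Ioc]; exact ENNReal.ofReal_ne_top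
  have havg : (⨍ t in Set.Ioc (0:ℝ) (2*Real.pi), f t) ∈ cobSet v :=
    (convex_cobSet v).set_average_mem (isClosed_cobSet v) hμ0 hμt
      (MeasureTheory.ae_of_all _ fun t => hfS t) hfi
  have hv : (⨍ t in Set.Ioc (0:ℝ) (2*Real.pi), f t) = v0 := by
    rw [MeasureTheory.setAverage_eq]
    have hvol : (MeasureTheory.volume (Set.Ioc (0:ℝ) (2*Real.pi))).toReal = 2*Real.pi := by
      rw [Real.volume_Ioc, ENNReal.toReal_ofReal (by linarith)]
      ring
    rw [MeasureTheory.measureReal_def, hvol]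
    funext i
    rw [Pi.smul_apply]
    have hi : (∫ t in Set.Ioc (0:ℝ) (2*Real.pi), f t) i
        = ∫ t in Set.Ioc (0:ℝ) (2*Real.pi), f t i :=
      ((ContinuousLinearMap.proj (R := ℂ) (φ := fun _ : Fin d => ℂ) i).integral_comp_comm
        hfi).symm
    rw [hi, ← intervalIntegral.integral_of_le (le_of_lt h2π)]
    set c := (v0 i).re
    set s := (v0 i).im
    have key : ∀ t : ℝ, f t i
        = (↑c + ↑s * Complex.I)
          + Complex.exp ((2*Complex.I) * ↑t) * (↑c - ↑s * Complex.I) := by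
      intro t
      show Complex.exp (↑t * Complex.I)
          * ((2 * (Real.cos t * c + Real.sin t * s) : ℝ) : ℂ) = _
      set u := Real.cos t with hu
      set w := Real.sin t with hw
      have hcs : (u:ℂ)^2 + (w:ℂ)^2 = 1 := by
        exact_mod_cast congrArg (fun x : ℝ => (x:ℂ)) (Real.cos_sq_add_sin_sq t)
      have e1 : Complex.exp (↑t * Complex.I) = ↑u + ↑w * Complex.I := by
        rw [Complex.exp_mul_I, hu, hw, Complex.ofReal_cos, Complex.ofReal_sin]
      have e2 : Complex.exp ((2*Complex.I) * ↑t) = (↑u + ↑w * Complex.I)^2 := by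
        rw [show (2*Complex.I)*(t:ℂ) = ↑t*Complex.I + ↑t*Complex.I by ring,
          Complex.exp_add, e1, sq]
      rw [e1, e2]; push_cast
      linear_combination (↑c + ↑s*Complex.I) * hcs
        + (2*↑u*↑w*↑s - ↑w^2*↑c + ↑w^2*Complex.I*↑s) * Complex.I_sq
    rw [intervalIntegral.integral_congr (g :=
      fun t => (↑c + ↑s * Complex.I)
        + Complex.exp ((2*Complex.I) * ↑t) * (↑c - ↑s * Complex.I))
      (fun t _ => key t)]
    have h2I : (2*Complex.I : ℂ) ≠ 0 := by simp [Complex.ext_iff]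
    rw [intervalIntegral.integral_add (intervalIntegrable_const)
        ((by fun_prop :
          Continuous fun t : ℝ => Complex.exp ((2*Complex.I)*↑t)
            * (↑c - ↑s*Complex.I)).intervalIntegrable _ _),
      intervalIntegral.integral_const, intervalIntegral.integral_mul_const,
      integral_exp_mul_complex h2I]
    have e0 : Complex.exp ((2*Complex.I) * ((0:ℝ):ℂ)) = 1 := by norm_num
    have e1 : Complex.exp ((2*Complex.I) * ((2*Real.pi:ℝ):ℂ)) = 1 := by
      rw [show (2*Complex.I) * ((2*Real.pi:ℝ):ℂ)
          = ((2:ℤ):ℂ) * (2*↑Real.pi*Complex.I) by push_cast; ring]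
      exact Complex.exp_int_mul_two_pi_mul_I 2
    rw [e0, e1]
    simp only [sub_self, zero_div, zero_mul, add_zero, sub_zero, Complex.real_smul, smul_eq_mul]
    have hπ : ((2*Real.pi : ℝ) : ℂ) ≠ 0 := by
      simp only [ne_eq, Complex.ofReal_eq_zero]
      positivity
    have hvi : v0 i = ↑c + ↑s * Complex.I := (Complex.re_add_im _).symm
    rw [hvi]
    push_cast
    push_cast at hπ
    rw [inv_mul_eq_div]
    exact mul_div_cancel_left₀ _ hπ
  rw [hv] at havg
  exact havg
end

section
/- Let t_1,...,t_N ≥ 0 and for each k let a_k, b_k ∈ ℝ² be collinear vectors with |a_k|² + |b_k|² ≤ 1. If Σ_k t_k a_k = t_0 e_1 and Σ_k t_k b_k = t_0 e_2 (where e_1, e_2 are the standard basis vectors of ℝ²) with t_0 ≥ 0, then Σ_k t_k ≥ 2 t_0. -/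
lemma norm_sq_eq_two (x : EuclideanSpace ℝ (Fin 2)) : ‖x‖ ^ 2 = x 0 ^ 2 + x 1 ^ 2 := by
  rw [EuclideanSpace.norm_eq, Real.sq_sqrt (by positivity)]
  simp [Fin.sum_univ_two, sq_abs]

lemma key_est (x y : EuclideanSpace ℝ (Fin 2))
    (h : (∃ c : ℝ, y = c • x) ∨ (∃ c : ℝ, x = c • y))
    (hn : ‖x‖ ^ 2 + ‖y‖ ^ 2 ≤ 1) : x 0 + y 1 ≤ 1 := by
  rw [norm_sq_eq_two, norm_sq_eq_two] at hn
  rcases h with ⟨c, hc⟩ | ⟨c, hc⟩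
  · have h0 : y 0 = c * x 0 := by rw [hc]; rfl
    have h1 : y 1 = c * x 1 := by rw [hc]; rfl
    rw [h1]; rw [h0, h1] at hn
    nlinarith [sq_nonneg (x 1 - c * x 0), sq_nonneg (x 0 + c * x 1 - 1)]
  · have h0 : x 0 = c * y 0 := by rw [hc]; rfl
    have h1 : x 1 = c * y 1 := by rw [hc]; rfl
    rw [h0]; rw [h0, h1] at hn
    nlinarith [sq_nonneg (y 0 - c * y 1), sq_nonneg (c * y 0 + y 1 - 1)]

/-- If `a_k, b_k ∈ ℝ²` are collinear with `|a_k|² + |b_k|² ≤ 1`, `t_k ≥ 0`,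
`Σ t_k a_k = t₀ e₁` and `Σ t_k b_k = t₀ e₂`, then `Σ t_k ≥ 2 t₀`. -/
theorem sum_ge_two_t0 {N : ℕ} (t : Fin N → ℝ) (t0 : ℝ)
    (a b : Fin N → EuclideanSpace ℝ (Fin 2))
    (ht : ∀ k, 0 ≤ t k) (ht0 : 0 ≤ t0)
    (hcol : ∀ k, (∃ c : ℝ, b k = c • a k) ∨ (∃ c : ℝ, a k = c • b k))
    (hnorm : ∀ k, ‖a k‖ ^ 2 + ‖b k‖ ^ 2 ≤ 1)
    (ha : ∑ k, t k • a k = t0 • EuclideanSpace.single (0 : Fin 2) (1 : ℝ))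
    (hb : ∑ k, t k • b k = t0 • EuclideanSpace.single (1 : Fin 2) (1 : ℝ)) :
    2 * t0 ≤ ∑ k, t k := by
  have ha0 : ∑ k, t k * a k 0 = t0 := by
    have := congrArg (EuclideanSpace.proj (0 : Fin 2)) ha
    simpa [map_sum, EuclideanSpace.single_apply, smul_eq_mul] using this
  have hb1 : ∑ k, t k * b k 1 = t0 := by
    have := congrArg (EuclideanSpace.proj (1 : Fin 2)) hb
    simpa [map_sum, EuclideanSpace.single_apply, smul_eq_mul] using this
  have hsum : ∑ k, (t k * a k 0 + t k * b k 1) ≤ ∑ k, t k := by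
    apply Finset.sum_le_sum
    intro k _
    have := key_est (a k) (b k) (hcol k) (hnorm k)
    nlinarith [ht k]
  rw [Finset.sum_add_distrib, ha0, hb1] at hsum
  linarith
end

section
/- Let O be a point on a side of a convex polygon in ℝ², different from the midpoint of that side. Then there exist affine symmetries about the line containing that side, arbitrarily close to the orthogonal symmetry, such that the distances from O to the images of all vertices of the polygon are pairwise distinct. -/
open Polynomial in
lemma quad_zero_set_finite (A B C : ℝ) (h : ¬(A = 0 ∧ B = 0 ∧ C = 0)) :
    {a : ℝ | A * a ^ 2 + B * a + C = 0}.Finite := by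
  have hp : (Polynomial.C A * X ^ 2 + Polynomial.C B * X + Polynomial.C C : ℝ[X]) ≠ 0 := by
    intro h0
    refine h ⟨?_, ?_, ?_⟩
    · have := congrArg (fun p => Polynomial.coeff p 2) h0
      simpa [coeff_add, coeff_C_mul, coeff_X_pow, coeff_C] using this
    · have := congrArg (fun p => Polynomial.coeff p 1) h0
      simpa [coeff_add, coeff_C_mul, coeff_X_pow, coeff_C] using this
    · have := congrArg (fun p => Polynomial.coeff p 0) h0
      simpa [coeff_add, coeff_C_mul, coeff_X_pow, coeff_C] using this
  have hf := Polynomial.finite_setOf_isRoot hp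
  convert hf using 1
  ext a
  simp [Polynomial.IsRoot, Polynomial.eval_add, Polynomial.eval_mul]

/-- Lemma on affine symmetries: with coordinates chosen so that `O` is the origin and the
side of the convex polygon lies on the abscissa (vertices `V i0`, `V i1` on the axis with
`O` strictly between them and not the midpoint, all other vertices strictly above the
axis), for every `ε > 0` there is an affine symmetry `(x,y) ↦ (x + a·y, −y)` with
`|a| < ε` such that the distances from `O` to the images of the vertices are pairwise
distinct. -/
theorem affine_symmetry_distinct_distances {m : ℕ} (V : Fin m → ℝ × ℝ)
    (hinj : Function.Injective V) (i0 i1 : Fin m) (hne : i0 ≠ i1)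
    (h0 : (V i0).2 = 0) (h1 : (V i1).2 = 0)
    (hleft : (V i0).1 < 0) (hright : 0 < (V i1).1)
    (hup : ∀ i, i ≠ i0 → i ≠ i1 → 0 < (V i).2)
    (hmid : (V i0).1 + (V i1).1 ≠ 0) :
    ∀ ε > 0, ∃ a : ℝ, |a| < ε ∧
      Function.Injective
        (fun i => Real.sqrt (((V i).1 + a * (V i).2) ^ 2 + ((V i).2) ^ 2)) := by
  intro ε hε
  set S : Set ℝ := ⋃ (p : Fin m × Fin m) (_ : p.1 ≠ p.2),
      {a : ℝ | ((V p.1).1 + a * (V p.1).2) ^ 2 + ((V p.1).2) ^ 2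
        = ((V p.2).1 + a * (V p.2).2) ^ 2 + ((V p.2).2) ^ 2} with hS
  have hSfin : S.Finite := by
    refine Set.Finite.biUnion (Set.finite_univ.subset (Set.subset_univ _)) ?_
    rintro ⟨i, j⟩ hij
    change i ≠ j at hij
    have key : ¬(((V i).2 ^ 2 - (V j).2 ^ 2 = 0) ∧
        (2 * ((V i).1 * (V i).2 - (V j).1 * (V j).2) = 0) ∧
        ((V i).1 ^ 2 + (V i).2 ^ 2 - (V j).1 ^ 2 - (V j).2 ^ 2 = 0)) := by
      rintro ⟨hA, hB, hC⟩
      by_cases hi0 : i = i0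
      · by_cases hj1 : j = i1
        · subst hi0 hj1
          rw [h0, h1] at hC
          have : ((V i).1 - (V j).1) * ((V i).1 + (V j).1) = 0 := by nlinarith [hC]
          rcases mul_eq_zero.mp this with h | h
          · nlinarith
          · exact hmid h
        · by_cases hj0 : j = i0
          · exact hij (hi0.trans hj0.symm)
          · have := hup j hj0 hj1
            subst hi0; rw [h0] at hA; nlinarith
      · by_cases hi1 : i = i1
        · by_cases hj0 : j = i0
          · subst hi1 hj0
            rw [h0, h1] at hC
            have : ((V i).1 - (V j).1) * ((V i).1 + (V j).1) = 0 := by nlinarith [hC]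
            rcases mul_eq_zero.mp this with h | h
            · nlinarith
            · exact hmid (by linarith)
          · by_cases hj1 : j = i1
            · exact hij (hi1.trans hj1.symm)
            · have := hup j hj0 hj1
              subst hi1; rw [h1] at hA; nlinarith
        · have hyi := hup i hi0 hi1
          by_cases hj0 : j = i0
          · subst hj0; rw [h0] at hA; nlinarith
          · by_cases hj1 : j = i1
            · subst hj1; rw [h1] at hA; nlinarith
            · have hyj := hup j hj0 hj1
              have hyeq : (V i).2 = (V j).2 := by nlinarith
              have hxeq : (V i).1 = (V j).1 := by
                have h' : (V i).1 * (V i).2 = (V j).1 * (V j).2 := by linarith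
                rw [hyeq] at h'
                exact mul_right_cancel₀ (ne_of_gt hyj) h'
              exact hij (hinj (Prod.ext hxeq hyeq))
    have hfin := quad_zero_set_finite ((V i).2 ^ 2 - (V j).2 ^ 2)
      (2 * ((V i).1 * (V i).2 - (V j).1 * (V j).2))
      ((V i).1 ^ 2 + (V i).2 ^ 2 - (V j).1 ^ 2 - (V j).2 ^ 2) key
    refine hfin.subset ?_
    intro a ha
    simp only [Set.mem_setOf_eq] at ha ⊢
    nlinarith [ha]
  have hIoo : (Set.Ioo (-ε) ε).Infinite := Set.Ioo_infinite (by linarith)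
  obtain ⟨a, haI, haS⟩ := (hIoo.diff hSfin).nonempty
  refine ⟨a, ?_, ?_⟩
  · rw [abs_lt]; exact ⟨haI.1, haI.2⟩
  · intro i j hij
    by_contra hne'
    apply haS
    simp only [hS, Set.mem_iUnion]
    refine ⟨(i, j), hne', ?_⟩
    simp only [Set.mem_setOf_eq]
    have h1' : (0:ℝ) ≤ ((V i).1 + a * (V i).2) ^ 2 + ((V i).2) ^ 2 := by positivity
    have h2' : (0:ℝ) ≤ ((V j).1 + a * (V j).2) ^ 2 + ((V j).2) ^ 2 := by positivity
    exact (Real.sqrt_inj h1' h2').mp hij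
end

section
/- For α, β ∈ (−π/2, π/2) with α ≠ β, let T_0 = [[0,0,0],[−sin α, cos α, 0],[cos α, sin α, 0]] and T_1 = [[0, −sin β, cos β],[0, cos β, sin β],[0,0,0]]. Then the spectral radius of T_0 T_1 equals 1, i.e., ρ(T_0T_1)^{1/2} = 1. -/
open Matrix

theorem aux_spectrum (c s k : ℂ) :
    k ∈ spectrum ℂ (!![0, 0, 0; 0, c, -s; 0, s, c] : Matrix (Fin 3) (Fin 3) ℂ)
      ↔ (k = 0 ∨ k = c + s * Complex.I ∨ k = c - s * Complex.I) := by
  rw [spectrum.mem_iff, Matrix.isUnit_iff_isUnit_det, isUnit_iff_ne_zero, not_not]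
  have h1 : (algebraMap ℂ (Matrix (Fin 3) (Fin 3) ℂ) k - !![0, 0, 0; 0, c, -s; 0, s, c])
      = !![k, 0, 0; 0, k - c, s; 0, -s, k - c] := by
    ext i j
    fin_cases i <;> fin_cases j <;>
      simp [Matrix.algebraMap_matrix_apply, Matrix.vecHead, Matrix.vecTail]
  have hd : (algebraMap ℂ (Matrix (Fin 3) (Fin 3) ℂ) k - !![0, 0, 0; 0, c, -s; 0, s, c]).det
      = k * ((k - (c + s * Complex.I)) * (k - (c - s * Complex.I))) := by
    rw [h1, Matrix.det_fin_three]
    simp [Matrix.vecHead, Matrix.vecTail]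
    ring_nf
    rw [Complex.I_sq]
    ring
  rw [hd]
  constructor
  · rintro h
    rcases mul_eq_zero.mp h with h | h
    · exact Or.inl h
    · rcases mul_eq_zero.mp h with h | h
      · exact Or.inr (Or.inl (by linear_combination h))
      · exact Or.inr (Or.inr (by linear_combination h))
  · rintro (rfl | rfl | rfl) <;> ring

/-- For `α ≠ β` in `(−π/2, π/2)`, the spectral radius of `T₀T₁` equals `1`. -/
theorem spectralRadius_T0T1_eq_one (α β : ℝ)
    (hα : α ∈ Set.Ioo (-(Real.pi / 2)) (Real.pi / 2))
    (hβ : β ∈ Set.Ioo (-(Real.pi / 2)) (Real.pi / 2)) (hne : α ≠ β) :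
    spectralRadius ℂ
      (((!![0, 0, 0; -Real.sin α, Real.cos α, 0; Real.cos α, Real.sin α, 0] *
          !![0, -Real.sin β, Real.cos β; 0, Real.cos β, Real.sin β; 0, 0, 0]).map
        (Complex.ofReal)) : Matrix (Fin 3) (Fin 3) ℂ) = 1 := by
  set θ : ℝ := α - β with hθ
  have hM : ((!![0, 0, 0; -Real.sin α, Real.cos α, 0; Real.cos α, Real.sin α, 0] *
          !![0, -Real.sin β, Real.cos β; 0, Real.cos β, Real.sin β; 0, 0, 0]).map
        (Complex.ofReal) : Matrix (Fin 3) (Fin 3) ℂ)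
      = !![0, 0, 0; 0, (Real.cos θ : ℂ), -(Real.sin θ : ℂ);
           0, (Real.sin θ : ℂ), (Real.cos θ : ℂ)] := by
    ext i j
    fin_cases i <;> fin_cases j <;>
      simp [Matrix.mul_apply, Fin.sum_univ_three, Matrix.vecHead, Matrix.vecTail,
        Real.cos_sub, Real.sin_sub, hθ] <;> ring
  rw [hM]
  have hw1 : ((Real.cos θ : ℂ) + (Real.sin θ : ℂ) * Complex.I)
      = Complex.exp (θ * Complex.I) := by
    rw [Complex.exp_mul_I, Complex.ofReal_cos, Complex.ofReal_sin]
  have hw2 : ((Real.cos θ : ℂ) - (Real.sin θ : ℂ) * Complex.I)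
      = Complex.exp ((-θ : ℝ) * Complex.I) := by
    rw [Complex.exp_mul_I, Complex.ofReal_cos, Complex.ofReal_sin, Complex.ofReal_neg,
      Complex.cos_neg, Complex.sin_neg]
    ring
  have hn1 : ‖(Real.cos θ : ℂ) + (Real.sin θ : ℂ) * Complex.I‖₊ = 1 := by
    have : ‖(Real.cos θ : ℂ) + (Real.sin θ : ℂ) * Complex.I‖ = 1 := by
      rw [hw1, Complex.norm_exp_ofReal_mul_I]
    ext
    simpa using this
  have hn2 : ‖(Real.cos θ : ℂ) - (Real.sin θ : ℂ) * Complex.I‖₊ = 1 := by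
    have : ‖(Real.cos θ : ℂ) - (Real.sin θ : ℂ) * Complex.I‖ = 1 := by
      rw [hw2, Complex.norm_exp_ofReal_mul_I]
    ext
    simpa using this
  rw [spectralRadius]
  apply le_antisymm
  · apply iSup₂_le
    intro k hk
    rcases (aux_spectrum _ _ k).mp hk with rfl | rfl | rfl
    · simp
    · rw [hn1]; simp
    · rw [hn2]; simp
  · have hmem : ((Real.cos θ : ℂ) + (Real.sin θ : ℂ) * Complex.I) ∈
        spectrum ℂ (!![0, 0, 0; 0, (Real.cos θ : ℂ), -(Real.sin θ : ℂ);
           0, (Real.sin θ : ℂ), (Real.cos θ : ℂ)] : Matrix (Fin 3) (Fin 3) ℂ) :=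
      (aux_spectrum _ _ _).mpr (Or.inr (Or.inl rfl))
    calc (1 : ENNReal) = ‖(Real.cos θ : ℂ) + (Real.sin θ : ℂ) * Complex.I‖₊ := by rw [hn1]; simp
      _ ≤ _ := le_iSup₂ (f := fun k (_ : k ∈ _) => (‖k‖₊ : ENNReal)) _ hmem
end

section
/- Let E_1,...,E_N be ellipses in ℝ^d with E_j = E(a_j,b_j), P = co{E_1,...,E_N}, and w ∈ ℝ^d. Then the Minkowski functional ‖w‖_P equals the infimum of Σ_{j=1}^N sqrt(c_j² + s_j²) over all real numbers c_j, s_j satisfying Σ_{j=1}^N (c_j a_j + s_j b_j) = w. -/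
open Pointwise

/-- For any `(c,s)` there is a point `x` on the ellipse with
`sqrt (c²+s²) • x = c • a + s • b`. -/
lemma exists_ellipse_smul {d : ℕ} (a b : EuclideanSpace ℝ (Fin d)) (c s : ℝ) :
    ∃ x ∈ ellipse a b, Real.sqrt (c ^ 2 + s ^ 2) • x = c • a + s • b := by
  refine ⟨Real.cos (Complex.arg (c + s * Complex.I)) • a
      + Real.sin (Complex.arg (c + s * Complex.I)) • b, ⟨_, rfl⟩, ?_⟩
  have h1 := Complex.norm_mul_cos_arg (c + s * Complex.I)
  have h2 := Complex.norm_mul_sin_arg (c + s * Complex.I)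
  simp only [Complex.add_re, Complex.ofReal_re, Complex.mul_re, Complex.I_re, Complex.I_im,
    Complex.ofReal_im, Complex.add_im, Complex.mul_im] at h1 h2
  rw [smul_add, smul_smul, smul_smul, ← Complex.norm_add_mul_I]
  rw [show ‖(↑c + ↑s * Complex.I : ℂ)‖ * Real.cos (Complex.arg (↑c + ↑s * Complex.I)) = c by
    linarith [h1], show ‖(↑c + ↑s * Complex.I : ℂ)‖ *
      Real.sin (Complex.arg (↑c + ↑s * Complex.I)) = s by linarith [h2]]

lemma mem_smul_hull {d N : ℕ} (a b : Fin N → EuclideanSpace ℝ (Fin d)) (c s : Fin N → ℝ)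
    (hr : 0 < ∑ j, Real.sqrt (c j ^ 2 + s j ^ 2)) :
    ∑ j, (c j • a j + s j • b j) ∈
      (∑ j, Real.sqrt (c j ^ 2 + s j ^ 2)) • convexHull ℝ (⋃ j, ellipse (a j) (b j)) := by
  set r := ∑ j, Real.sqrt (c j ^ 2 + s j ^ 2) with hrdef
  choose x hx hxe using fun j => exists_ellipse_smul (a j) (b j) (c j) (s j)
  have key : ∑ j, (c j • a j + s j • b j)
      = r • ∑ j, (Real.sqrt (c j ^ 2 + s j ^ 2) / r) • x j := by
    rw [Finset.smul_sum]
    refine Finset.sum_congr rfl fun j _ => ?_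
    rw [smul_smul, mul_div_cancel₀ _ hr.ne', hxe j]
  rw [key]
  refine Set.smul_mem_smul_set (Convex.sum_mem (convex_convexHull ℝ _)
    (fun j _ => div_nonneg (Real.sqrt_nonneg _) hr.le) ?_
    (fun j _ => subset_convexHull ℝ _ (Set.mem_iUnion.2 ⟨j, hx j⟩)))
  rw [← Finset.sum_div, ← hrdef, div_self hr.ne']

lemma gauge_le_rep {d N : ℕ} (a b : Fin N → EuclideanSpace ℝ (Fin d)) (c s : Fin N → ℝ) :
    gauge (convexHull ℝ (⋃ j, ellipse (a j) (b j))) (∑ j, (c j • a j + s j • b j))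
      ≤ ∑ j, Real.sqrt (c j ^ 2 + s j ^ 2) := by
  have hnn : (0 : ℝ) ≤ ∑ j, Real.sqrt (c j ^ 2 + s j ^ 2) :=
    Finset.sum_nonneg fun j _ => Real.sqrt_nonneg _
  rcases hnn.eq_or_lt with h | h
  · have hz : ∀ j ∈ Finset.univ, Real.sqrt (c j ^ 2 + s j ^ 2) = 0 :=
      (Finset.sum_eq_zero_iff_of_nonneg fun j _ => Real.sqrt_nonneg _).1 h.symm
    have hcs : ∀ j, c j = 0 ∧ s j = 0 := by
      intro j
      have := Real.sqrt_eq_zero'.1 (hz j (Finset.mem_univ j))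
      constructor <;> nlinarith [sq_nonneg (c j), sq_nonneg (s j)]
    have : ∑ j, (c j • a j + s j • b j) = 0 := by
      refine Finset.sum_eq_zero fun j _ => ?_
      rw [(hcs j).1, (hcs j).2, zero_smul, zero_smul, add_zero]
    rw [this, gauge_zero, ← h]
  · exact gauge_le_of_mem hnn (mem_smul_hull a b c s h)

/-- Triangle inequality for `sqrt (x² + y²)` sums, via `ℂ`. -/
lemma sqrt_sq_add_sq_sum_le {ι : Type*} (t : Finset ι) (f g : ι → ℝ) :
    Real.sqrt ((∑ i ∈ t, f i) ^ 2 + (∑ i ∈ t, g i) ^ 2)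
      ≤ ∑ i ∈ t, Real.sqrt (f i ^ 2 + g i ^ 2) := by
  calc Real.sqrt ((∑ i ∈ t, f i) ^ 2 + (∑ i ∈ t, g i) ^ 2)
      = ‖∑ i ∈ t, ((f i : ℂ) + g i * Complex.I)‖ := by
        rw [← Complex.norm_add_mul_I]
        congr 2
        push_cast [Finset.sum_add_distrib, Finset.sum_mul]
        ring
    _ ≤ ∑ i ∈ t, ‖(f i : ℂ) + g i * Complex.I‖ := norm_sum_le _ _
    _ = ∑ i ∈ t, Real.sqrt (f i ^ 2 + g i ^ 2) := by
        simp [Complex.norm_add_mul_I]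

lemma rep_of_mem_hull {d N : ℕ} (a b : Fin N → EuclideanSpace ℝ (Fin d))
    {v : EuclideanSpace ℝ (Fin d)} (hv : v ∈ convexHull ℝ (⋃ j, ellipse (a j) (b j))) :
    ∃ c s : Fin N → ℝ, ∑ j, (c j • a j + s j • b j) = v ∧
      ∑ j, Real.sqrt (c j ^ 2 + s j ^ 2) ≤ 1 := by
  classical
  rw [mem_convexHull_iff_exists_fintype] at hv
  obtain ⟨ι, hι, wt, z, hwt0, hwt1, hz, hzv⟩ := hv
  have hz' : ∀ i, ∃ j, ∃ θ : ℝ, z i = Real.cos θ • a j + Real.sin θ • b j := by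
    intro i
    obtain ⟨j, hj⟩ := Set.mem_iUnion.1 (hz i)
    exact ⟨j, hj⟩
  choose J θ hJ using hz'
  refine ⟨fun j => ∑ i ∈ Finset.univ.filter (fun i => J i = j), wt i * Real.cos (θ i),
          fun j => ∑ i ∈ Finset.univ.filter (fun i => J i = j), wt i * Real.sin (θ i), ?_, ?_⟩
  · have hfib : ∀ j, (∑ i ∈ Finset.univ.filter (fun i => J i = j), wt i * Real.cos (θ i)) • a j
        + (∑ i ∈ Finset.univ.filter (fun i => J i = j), wt i * Real.sin (θ i)) • b j
        = ∑ i ∈ Finset.univ.filter (fun i => J i = j), wt i • z i := by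
      intro j
      rw [Finset.sum_smul, Finset.sum_smul, ← Finset.sum_add_distrib]
      refine Finset.sum_congr rfl fun i hi => ?_
      have hij : J i = j := (Finset.mem_filter.1 hi).2
      rw [hJ i, hij, smul_add, smul_smul, smul_smul]
    calc ∑ j, ((∑ i ∈ Finset.univ.filter (fun i => J i = j), wt i * Real.cos (θ i)) • a j
          + (∑ i ∈ Finset.univ.filter (fun i => J i = j), wt i * Real.sin (θ i)) • b j)
        = ∑ j, ∑ i ∈ Finset.univ.filter (fun i => J i = j), wt i • z i :=
          Finset.sum_congr rfl fun j _ => hfib j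
      _ = ∑ i, wt i • z i := Finset.sum_fiberwise _ _ _
      _ = v := hzv
  · calc ∑ j, Real.sqrt ((∑ i ∈ Finset.univ.filter (fun i => J i = j), wt i * Real.cos (θ i)) ^ 2
          + (∑ i ∈ Finset.univ.filter (fun i => J i = j), wt i * Real.sin (θ i)) ^ 2)
        ≤ ∑ j, ∑ i ∈ Finset.univ.filter (fun i => J i = j),
            Real.sqrt ((wt i * Real.cos (θ i)) ^ 2 + (wt i * Real.sin (θ i)) ^ 2) :=
          Finset.sum_le_sum fun j _ => sqrt_sq_add_sq_sum_le _ _ _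
      _ = ∑ j, ∑ i ∈ Finset.univ.filter (fun i => J i = j), wt i := by
          refine Finset.sum_congr rfl fun j _ => Finset.sum_congr rfl fun i _ => ?_
          have h1 : (wt i * Real.cos (θ i)) ^ 2 + (wt i * Real.sin (θ i)) ^ 2 = wt i ^ 2 := by
            have := Real.sin_sq_add_cos_sq (θ i)
            ring_nf
            nlinarith [Real.sin_sq_add_cos_sq (θ i)]
          rw [h1, Real.sqrt_sq (hwt0 i)]
      _ = ∑ i, wt i := Finset.sum_fiberwise _ _ _
      _ = 1 := hwt1

/-- The Minkowski functional of `P = co{E_1,…,E_N}` at `w` equals the infimum of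
`Σ_j sqrt(c_j² + s_j²)` over all reals `c_j, s_j` with `Σ_j (c_j a_j + s_j b_j) = w`. -/
theorem gauge_eq_inf_sum_sqrt {d N : ℕ}
    (a b : Fin N → EuclideanSpace ℝ (Fin d)) (w : EuclideanSpace ℝ (Fin d))
    (hw : ∃ c s : Fin N → ℝ, ∑ j, (c j • a j + s j • b j) = w) :
    gauge (convexHull ℝ (⋃ j, ellipse (a j) (b j))) w
      = sInf {r : ℝ | ∃ c s : Fin N → ℝ,
          (∑ j, (c j • a j + s j • b j) = w) ∧
          r = ∑ j, Real.sqrt ((c j) ^ 2 + (s j) ^ 2)} := by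
  classical
  obtain ⟨c₀, s₀, h₀⟩ := hw
  set S := {r : ℝ | ∃ c s : Fin N → ℝ,
      (∑ j, (c j • a j + s j • b j) = w) ∧
      r = ∑ j, Real.sqrt ((c j) ^ 2 + (s j) ^ 2)} with hSdef
  have hSne : S.Nonempty := ⟨_, c₀, s₀, h₀, rfl⟩
  have hSbdd : BddBelow S := by
    refine ⟨0, ?_⟩
    rintro r ⟨c, s, -, rfl⟩
    exact Finset.sum_nonneg fun j _ => Real.sqrt_nonneg _
  apply le_antisymm
  · refine le_csInf hSne ?_
    rintro r ⟨c, s, hsum, rfl⟩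
    rw [← hsum]
    exact gauge_le_rep a b c s
  · rw [gauge_def]
    by_cases hT : ({r ∈ Set.Ioi (0 : ℝ) |
        w ∈ r • convexHull ℝ (⋃ j, ellipse (a j) (b j))}).Nonempty
    · refine le_csInf hT ?_
      rintro r ⟨hr0, hrP⟩
      obtain ⟨v, hv, hveq⟩ := Set.mem_smul_set.1 hrP
      obtain ⟨c, s, hc, hle⟩ := rep_of_mem_hull a b hv
      have hr0' : (0 : ℝ) < r := hr0
      refine le_trans (csInf_le hSbdd ⟨fun j => r * c j, fun j => r * s j, ?_, rfl⟩) ?_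
      · rw [← hveq, ← hc, Finset.smul_sum]
        refine Finset.sum_congr rfl fun j _ => ?_
        rw [smul_add, smul_smul, smul_smul]
      · have heq : ∑ j, Real.sqrt ((r * c j) ^ 2 + (r * s j) ^ 2)
            = r * ∑ j, Real.sqrt (c j ^ 2 + s j ^ 2) := by
          rw [Finset.mul_sum]
          refine Finset.sum_congr rfl fun j _ => ?_
          rw [show (r * c j) ^ 2 + (r * s j) ^ 2 = r ^ 2 * (c j ^ 2 + s j ^ 2) by ring,
            Real.sqrt_mul (sq_nonneg r), Real.sqrt_sq hr0'.le]
        rw [heq]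
        exact mul_le_of_le_one_right hr0'.le hle
    · rw [Set.not_nonempty_iff_eq_empty.1 hT, Real.sInf_empty]
      have hr₀ : ∑ j, Real.sqrt (c₀ j ^ 2 + s₀ j ^ 2) = 0 := by
        by_contra h
        have hpos : 0 < ∑ j, Real.sqrt (c₀ j ^ 2 + s₀ j ^ 2) :=
          (Finset.sum_nonneg fun j _ => Real.sqrt_nonneg _).lt_of_ne (Ne.symm h)
        exact hT ⟨_, hpos, h₀ ▸ mem_smul_hull a b c₀ s₀ hpos⟩
      exact csInf_le hSbdd ⟨c₀, s₀, h₀, hr₀.symm⟩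
end
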